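/- Let w > 0, σ > 0, assume the pair (A, B) is controllable and the prediction horizon N is greater than or equal to the controllability index of (A, B), and assume D ∩ C_σ is nonempty. Let x ∈ ℝ^{n_x} belong to the feasibility region of HMPC, let (x*, u*, x̂*, û*) with x̂* = (x̂_e*, x̂_s*, x̂_c*) be an optimal solution of the HMPC optimization problem for state x and reference parameters (r_x, r_u), and let (x̊, ů) with x̊ = (x̊_e, x̊_s, x̊_c) be the unique minimizer of V_h over D ∩ C_σ. Then x = x̂_e* + x̂_c* if and only if x = x̊_e + x̊_c. -/

import Mathlib

open Matrix Filter

/-- Vectors in `ℝ^n`. -/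
abbrev RVec (n : ℕ) := Fin n → ℝ

/-- A parameter triple `(v_e, v_s, v_c) ∈ (ℝ^m)³` of a harmonic signal. -/
abbrev HTriple (n : ℕ) := RVec n × RVec n × RVec n

/-- A parameter pair `((x̂_e, x̂_s, x̂_c), (û_e, û_s, û_c))`. -/
abbrev HParams (nx nu : ℕ) := HTriple nx × HTriple nu

/-- Value at (relative) time `k` of the harmonic signal parameterized by the triple `v`
with frequency `w`: `v_e + v_s sin(w k) + v_c cos(w k)`. -/
noncomputable def hSeq {m : ℕ} (w : ℝ) (v : HTriple m) (k : ℕ) : RVec m :=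
  v.1 + Real.sin (w * (k : ℝ)) • v.2.1 + Real.cos (w * (k : ℝ)) • v.2.2

/-- The transform `T̂_w^m` acting on parameter triples: the identity acts on `v_e` and the
rotation `T_w^m = [[cos w · I, -sin w · I], [sin w · I, cos w · I]]` acts on `(v_s, v_c)`. -/
noncomputable def hatT {m : ℕ} (w : ℝ) (v : HTriple m) : HTriple m :=
  (v.1, Real.cos w • v.2.1 - Real.sin w • v.2.2, Real.sin w • v.2.1 + Real.cos w • v.2.2)

/-- Membership in the set `D` (harmonic parameters consistent with the dynamics `x⁺ = Ax + Bu`). -/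
def inD {nx nu : ℕ} (A : Matrix (Fin nx) (Fin nx) ℝ) (B : Matrix (Fin nx) (Fin nu) ℝ)
    (w : ℝ) (p : HParams nx nu) : Prop :=
  p.1.1 = A.mulVec p.1.1 + B.mulVec p.2.1 ∧
  Real.cos w • p.1.2.1 - Real.sin w • p.1.2.2 = A.mulVec p.1.2.1 + B.mulVec p.2.2.1 ∧
  Real.sin w • p.1.2.1 + Real.cos w • p.1.2.2 = A.mulVec p.1.2.2 + B.mulVec p.2.2.2

/-- Membership in the set `C_σ` (second-order-cone conditions guaranteeing constraint
satisfaction of the harmonic signal). -/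
def inC {nx nu ny : ℕ} (E : Matrix (Fin ny) (Fin nx) ℝ) (F : Matrix (Fin ny) (Fin nu) ℝ)
    (ylo yhi : RVec ny) (σ : ℝ) (p : HParams nx nu) : Prop :=
  ∀ i : Fin ny,
    Real.sqrt ((E.mulVec p.1.2.1 + F.mulVec p.2.2.1) i ^ 2
        + (E.mulVec p.1.2.2 + F.mulVec p.2.2.2) i ^ 2)
      ≤ yhi i - σ - (E.mulVec p.1.1 + F.mulVec p.2.1) i ∧
    Real.sqrt ((E.mulVec p.1.2.1 + F.mulVec p.2.2.1) i ^ 2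
        + (E.mulVec p.1.2.2 + F.mulVec p.2.2.2) i ^ 2)
      ≤ (E.mulVec p.1.1 + F.mulVec p.2.1) i - ylo i - σ

/-- The set `D ∩ C_σ` of admissible harmonic parameters. -/
def paramSet {nx nu ny : ℕ} (A : Matrix (Fin nx) (Fin nx) ℝ) (B : Matrix (Fin nx) (Fin nu) ℝ)
    (E : Matrix (Fin ny) (Fin nx) ℝ) (F : Matrix (Fin ny) (Fin nu) ℝ)
    (ylo yhi : RVec ny) (w σ : ℝ) : Set (HParams nx nu) :=
  {p | inD A B w p ∧ inC E F ylo yhi σ p}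

/-- The quadratic form `‖v‖²_M = vᵀ M v`. -/
def quadForm {n : ℕ} (M : Matrix (Fin n) (Fin n) ℝ) (v : RVec n) : ℝ :=
  v ⬝ᵥ M.mulVec v

/-- The offset cost `V_h` with reference parameters `r` evaluated at parameters `p`. -/
def Vh {nx nu : ℕ} (Te Th : Matrix (Fin nx) (Fin nx) ℝ) (Se Sh : Matrix (Fin nu) (Fin nu) ℝ)
    (r p : HParams nx nu) : ℝ :=
  quadForm Te (p.1.1 - r.1.1) + quadForm Th (p.1.2.1 - r.1.2.1)
    + quadForm Th (p.1.2.2 - r.1.2.2)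
    + quadForm Se (p.2.1 - r.2.1) + quadForm Sh (p.2.2.1 - r.2.2.1)
    + quadForm Sh (p.2.2.2 - r.2.2.2)

/-- `p` is the unique minimizer of `f` on `S`. -/
def IsUniqueMinOn {α : Type*} (f : α → ℝ) (S : Set α) (p : α) : Prop :=
  p ∈ S ∧ ∀ q ∈ S, q ≠ p → f p < f q

/-- `(xs, us, p)` is a feasible solution of the HMPC optimization problem for the state `x`. -/
def FeasSol {nx nu ny : ℕ} (A : Matrix (Fin nx) (Fin nx) ℝ) (B : Matrix (Fin nx) (Fin nu) ℝ)
    (E : Matrix (Fin ny) (Fin nx) ℝ) (F : Matrix (Fin ny) (Fin nu) ℝ)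
    (ylo yhi : RVec ny) (w σ : ℝ) (N : ℕ) (x : RVec nx)
    (xs : ℕ → RVec nx) (us : ℕ → RVec nu) (p : HParams nx nu) : Prop :=
  xs 0 = x ∧
  (∀ k < N, xs (k + 1) = A.mulVec (xs k) + B.mulVec (us k)) ∧
  (∀ k < N, ∀ i, ylo i ≤ (E.mulVec (xs k) + F.mulVec (us k)) i
      ∧ (E.mulVec (xs k) + F.mulVec (us k)) i ≤ yhi i) ∧
  xs N = hSeq w p.1 N ∧
  inD A B w p ∧ inC E F ylo yhi σ p

/-- `x` belongs to the feasibility region of the HMPC optimization problem. -/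
def Feasible {nx nu ny : ℕ} (A : Matrix (Fin nx) (Fin nx) ℝ) (B : Matrix (Fin nx) (Fin nu) ℝ)
    (E : Matrix (Fin ny) (Fin nx) ℝ) (F : Matrix (Fin ny) (Fin nu) ℝ)
    (ylo yhi : RVec ny) (w σ : ℝ) (N : ℕ) (x : RVec nx) : Prop :=
  ∃ xs us p, FeasSol A B E F ylo yhi w σ N x xs us p

/-- The HMPC cost `J` of a solution `(xs, us, p)` with reference parameters `r`. -/
noncomputable def Jcost {nx nu : ℕ} (Q Te Th : Matrix (Fin nx) (Fin nx) ℝ)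
    (R Se Sh : Matrix (Fin nu) (Fin nu) ℝ) (w : ℝ) (N : ℕ) (r : HParams nx nu)
    (xs : ℕ → RVec nx) (us : ℕ → RVec nu) (p : HParams nx nu) : ℝ :=
  (∑ k ∈ Finset.range N,
      (quadForm Q (xs k - hSeq w p.1 k) + quadForm R (us k - hSeq w p.2 k)))
    + Vh Te Th Se Sh r p

/-- `(xs, us, p)` is an optimal solution of the HMPC optimization problem for state `x` and
reference parameters `r`. -/
noncomputable def OptSol {nx nu ny : ℕ} (A : Matrix (Fin nx) (Fin nx) ℝ)
    (B : Matrix (Fin nx) (Fin nu) ℝ)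
    (E : Matrix (Fin ny) (Fin nx) ℝ) (F : Matrix (Fin ny) (Fin nu) ℝ)
    (ylo yhi : RVec ny) (Q Te Th : Matrix (Fin nx) (Fin nx) ℝ)
    (R Se Sh : Matrix (Fin nu) (Fin nu) ℝ) (w σ : ℝ) (N : ℕ) (r : HParams nx nu)
    (x : RVec nx) (xs : ℕ → RVec nx) (us : ℕ → RVec nu) (p : HParams nx nu) : Prop :=
  FeasSol A B E F ylo yhi w σ N x xs us p ∧
  ∀ xs' us' p', FeasSol A B E F ylo yhi w σ N x xs' us' p' →
    Jcost Q Te Th R Se Sh w N r xs us p ≤ Jcost Q Te Th R Se Sh w N r xs' us' p'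

/-- The optimal value `H*(x; r)` of the HMPC optimization problem. -/
noncomputable def Hstar {nx nu ny : ℕ} (A : Matrix (Fin nx) (Fin nx) ℝ)
    (B : Matrix (Fin nx) (Fin nu) ℝ)
    (E : Matrix (Fin ny) (Fin nx) ℝ) (F : Matrix (Fin ny) (Fin nu) ℝ)
    (ylo yhi : RVec ny) (Q Te Th : Matrix (Fin nx) (Fin nx) ℝ)
    (R Se Sh : Matrix (Fin nu) (Fin nu) ℝ) (w σ : ℝ) (N : ℕ) (r : HParams nx nu)
    (x : RVec nx) : ℝ :=
  sInf {J : ℝ | ∃ xs us p, FeasSol A B E F ylo yhi w σ N x xs us p ∧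
    J = Jcost Q Te Th R Se Sh w N r xs us p}

/-- The controllability matrix `[B, AB, …, A^{ν−1}B]` of the pair `(A, B)`. -/
def ctrbMat {nx nu : ℕ} (A : Matrix (Fin nx) (Fin nx) ℝ) (B : Matrix (Fin nx) (Fin nu) ℝ)
    (ν : ℕ) : Matrix (Fin nx) (Fin ν × Fin nu) ℝ :=
  Matrix.of fun i q => ((A ^ (q.1 : ℕ)) * B) i q.2

/-- Squared Euclidean norm of a vector. -/
def nsq {n : ℕ} (v : RVec n) : ℝ := ∑ i, v i ^ 2

/-- Squared Euclidean norm of a parameter pair. -/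
def pNsq {nx nu : ℕ} (p : HParams nx nu) : ℝ :=
  nsq p.1.1 + nsq p.1.2.1 + nsq p.1.2.2 + nsq p.2.1 + nsq p.2.2.1 + nsq p.2.2.2

/-- `f` is `μ`-strongly convex on the parameter space:
`f z − f y ≥ ⟨∇f(y), z − y⟩ + (μ/2)‖z − y‖²` for all `z, y`. -/
def StrConvVh {nx nu : ℕ} (μ : ℝ) (f : HParams nx nu → ℝ) : Prop :=
  ∀ z y : HParams nx nu, f z - f y ≥ (fderiv ℝ f y) (z - y) + μ / 2 * pNsq (z - y)

/-- The rotation matrix `T_w^m = [[cos w · I, −sin w · I], [sin w · I, cos w · I]] ∈ ℝ^{2m×2m}`. -/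
noncomputable def TwMat (m : ℕ) (w : ℝ) : Matrix (Fin m ⊕ Fin m) (Fin m ⊕ Fin m) ℝ :=
  Matrix.fromBlocks (Real.cos w • (1 : Matrix (Fin m) (Fin m) ℝ))
    (-(Real.sin w • (1 : Matrix (Fin m) (Fin m) ℝ)))
    (Real.sin w • (1 : Matrix (Fin m) (Fin m) ℝ))
    (Real.cos w • (1 : Matrix (Fin m) (Fin m) ℝ))

/-- The matrix `T̂_w^m = diag(I_m, T_w^m) ∈ ℝ^{3m×3m}`. -/
noncomputable def ThatMat (m : ℕ) (w : ℝ) :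
    Matrix (Fin m ⊕ (Fin m ⊕ Fin m)) (Fin m ⊕ (Fin m ⊕ Fin m)) ℝ :=
  Matrix.fromBlocks (1 : Matrix (Fin m) (Fin m) ℝ) 0 0 (TwMat m w)


section Aux

open Real Finset

/-! ### Auxiliary lemmas -/

lemma hSeq_zero' {m : ℕ} (w : ℝ) (v : HTriple m) : hSeq w v 0 = v.1 + v.2.2 := by
  simp [hSeq]

lemma quadForm_nonneg' {n : ℕ} {M : Matrix (Fin n) (Fin n) ℝ} (hM : M.PosDef) (v : RVec n) :
    0 ≤ quadForm M v := by
  rcases eq_or_ne v 0 with h | h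
  · simp [h, quadForm]
  · have := hM.dotProduct_mulVec_pos h
    simpa [quadForm] using this.le

lemma quadForm_eq_zero' {n : ℕ} {M : Matrix (Fin n) (Fin n) ℝ} (hM : M.PosDef) {v : RVec n}
    (h : quadForm M v = 0) : v = 0 := by
  by_contra hv
  have := hM.dotProduct_mulVec_pos hv
  simp only [quadForm] at h
  simp [h] at this

lemma quadForm_zero' {n : ℕ} (M : Matrix (Fin n) (Fin n) ℝ) : quadForm M 0 = 0 := by
  simp [quadForm]

lemma quadForm_smul' {n : ℕ} (M : Matrix (Fin n) (Fin n) ℝ) (t : ℝ) (v : RVec n) :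
    quadForm M (t • v) = t ^ 2 * quadForm M v := by
  simp only [quadForm, Matrix.mulVec_smul, smul_dotProduct, dotProduct_smul,
    smul_eq_mul]
  ring

lemma quadForm_add_smul' {n : ℕ} (M : Matrix (Fin n) (Fin n) ℝ) (u v : RVec n) (t : ℝ) :
    quadForm M (u + t • v)
      = quadForm M u + t * (u ⬝ᵥ M.mulVec v + v ⬝ᵥ M.mulVec u) + t ^ 2 * quadForm M v := by
  simp only [quadForm, Matrix.mulVec_add, Matrix.mulVec_smul, dotProduct_add,
    add_dotProduct, smul_dotProduct, dotProduct_smul, smul_eq_mul]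
  ring

lemma sqrt_tri' (a b c d : ℝ) :
    Real.sqrt ((a + c) ^ 2 + (b + d) ^ 2) ≤ Real.sqrt (a ^ 2 + b ^ 2)
      + Real.sqrt (c ^ 2 + d ^ 2) := by
  have h1 : 0 ≤ Real.sqrt (a ^ 2 + b ^ 2) := Real.sqrt_nonneg _
  have h2 : 0 ≤ Real.sqrt (c ^ 2 + d ^ 2) := Real.sqrt_nonneg _
  have e1 : Real.sqrt (a ^ 2 + b ^ 2) ^ 2 = a ^ 2 + b ^ 2 := Real.sq_sqrt (by positivity)
  have e2 : Real.sqrt (c ^ 2 + d ^ 2) ^ 2 = c ^ 2 + d ^ 2 := Real.sq_sqrt (by positivity)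
  have e3 : (Real.sqrt (a ^ 2 + b ^ 2) * Real.sqrt (c ^ 2 + d ^ 2)) ^ 2
      = (a ^ 2 + b ^ 2) * (c ^ 2 + d ^ 2) := by rw [mul_pow, e1, e2]
  have hcs : a * c + b * d ≤ Real.sqrt (a ^ 2 + b ^ 2) * Real.sqrt (c ^ 2 + d ^ 2) := by
    nlinarith [e3, mul_nonneg h1 h2, sq_nonneg (a * d - b * c),
      sq_nonneg (Real.sqrt (a ^ 2 + b ^ 2) * Real.sqrt (c ^ 2 + d ^ 2) - (a * c + b * d))]
  have hle : (a + c) ^ 2 + (b + d) ^ 2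
      ≤ (Real.sqrt (a ^ 2 + b ^ 2) + Real.sqrt (c ^ 2 + d ^ 2)) ^ 2 := by nlinarith
  calc Real.sqrt ((a + c) ^ 2 + (b + d) ^ 2)
      ≤ Real.sqrt ((Real.sqrt (a ^ 2 + b ^ 2) + Real.sqrt (c ^ 2 + d ^ 2)) ^ 2) :=
        Real.sqrt_le_sqrt hle
    _ = _ := Real.sqrt_sq (by positivity)

lemma sqrt_smul' {t : ℝ} (ht : 0 ≤ t) (a b : ℝ) :
    Real.sqrt ((t * a) ^ 2 + (t * b) ^ 2) = t * Real.sqrt (a ^ 2 + b ^ 2) := by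
  rw [show (t * a) ^ 2 + (t * b) ^ 2 = t ^ 2 * (a ^ 2 + b ^ 2) by ring,
    Real.sqrt_mul (by positivity), Real.sqrt_sq ht]

lemma sqrt_conv' {t : ℝ} (h0 : 0 ≤ t) (h1 : t ≤ 1) (a b c d : ℝ) :
    Real.sqrt (((1 - t) * a + t * c) ^ 2 + ((1 - t) * b + t * d) ^ 2)
      ≤ (1 - t) * Real.sqrt (a ^ 2 + b ^ 2) + t * Real.sqrt (c ^ 2 + d ^ 2) := by
  calc Real.sqrt (((1 - t) * a + t * c) ^ 2 + ((1 - t) * b + t * d) ^ 2)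
      ≤ Real.sqrt (((1 - t) * a) ^ 2 + ((1 - t) * b) ^ 2)
        + Real.sqrt ((t * c) ^ 2 + (t * d) ^ 2) := sqrt_tri' _ _ _ _
    _ = _ := by rw [sqrt_smul' (by linarith) a b, sqrt_smul' h0 c d]

lemma harm_abs' (θ a b : ℝ) :
    |Real.sin θ * a + Real.cos θ * b| ≤ Real.sqrt (a ^ 2 + b ^ 2) := by
  have h : (Real.sin θ * a + Real.cos θ * b) ^ 2 ≤ a ^ 2 + b ^ 2 := by
    nlinarith [Real.sin_sq_add_cos_sq θ, sq_nonneg (Real.cos θ * a - Real.sin θ * b)]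
  calc |Real.sin θ * a + Real.cos θ * b|
      = Real.sqrt ((Real.sin θ * a + Real.cos θ * b) ^ 2) := (Real.sqrt_sq_eq_abs _).symm
    _ ≤ _ := Real.sqrt_le_sqrt h

lemma hSeq_succ' {nx nu : ℕ} {A : Matrix (Fin nx) (Fin nx) ℝ} {B : Matrix (Fin nx) (Fin nu) ℝ}
    {w : ℝ} {p : HParams nx nu} (hp : inD A B w p) (k : ℕ) :
    hSeq w p.1 (k + 1) = A.mulVec (hSeq w p.1 k) + B.mulVec (hSeq w p.2 k) := by
  obtain ⟨h1, h2, h3⟩ := hp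
  have e1 : A.mulVec (hSeq w p.1 k) + B.mulVec (hSeq w p.2 k)
      = (A.mulVec p.1.1 + B.mulVec p.2.1)
        + Real.sin (w * k) • (A.mulVec p.1.2.1 + B.mulVec p.2.2.1)
        + Real.cos (w * k) • (A.mulVec p.1.2.2 + B.mulVec p.2.2.2) := by
    simp only [hSeq, Matrix.mulVec_add, Matrix.mulVec_smul]
    module
  rw [e1, ← h1, ← h2, ← h3]
  simp only [hSeq, Nat.cast_add, Nat.cast_one, mul_add, mul_one, Real.sin_add, Real.cos_add]
  module

lemma yHarm' {nx nu ny : ℕ} (E : Matrix (Fin ny) (Fin nx) ℝ) (F : Matrix (Fin ny) (Fin nu) ℝ)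
    (w : ℝ) (p : HParams nx nu) (k : ℕ) :
    E.mulVec (hSeq w p.1 k) + F.mulVec (hSeq w p.2 k)
      = (E.mulVec p.1.1 + F.mulVec p.2.1)
        + Real.sin (w * k) • (E.mulVec p.1.2.1 + F.mulVec p.2.2.1)
        + Real.cos (w * k) • (E.mulVec p.1.2.2 + F.mulVec p.2.2.2) := by
  simp only [hSeq, Matrix.mulVec_add, Matrix.mulVec_smul]
  module

lemma margin' {nx nu ny : ℕ} {E : Matrix (Fin ny) (Fin nx) ℝ} {F : Matrix (Fin ny) (Fin nu) ℝ}
    {ylo yhi : RVec ny} {w σ : ℝ} {p : HParams nx nu} (hC : inC E F ylo yhi σ p)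
    (k : ℕ) (i : Fin ny) :
    ylo i + σ ≤ (E.mulVec (hSeq w p.1 k) + F.mulVec (hSeq w p.2 k)) i ∧
      (E.mulVec (hSeq w p.1 k) + F.mulVec (hSeq w p.2 k)) i ≤ yhi i - σ := by
  obtain ⟨h1, h2⟩ := hC i
  have habs := harm_abs' (w * k) ((E.mulVec p.1.2.1 + F.mulVec p.2.2.1) i)
    ((E.mulVec p.1.2.2 + F.mulVec p.2.2.2) i)
  have hval : (E.mulVec (hSeq w p.1 k) + F.mulVec (hSeq w p.2 k)) i
      = (E.mulVec p.1.1 + F.mulVec p.2.1) i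
        + (Real.sin (w * k) * (E.mulVec p.1.2.1 + F.mulVec p.2.2.1) i
          + Real.cos (w * k) * (E.mulVec p.1.2.2 + F.mulVec p.2.2.2) i) := by
    have h := congrFun (yHarm' E F w p k) i
    simp only [Pi.add_apply, Pi.smul_apply, smul_eq_mul] at h ⊢
    linear_combination h
  obtain ⟨hna, hnb⟩ := abs_le.mp habs
  constructor <;> rw [hval] <;> linarith

lemma harmFeas' {nx nu ny : ℕ} {A : Matrix (Fin nx) (Fin nx) ℝ} {B : Matrix (Fin nx) (Fin nu) ℝ}
    {E : Matrix (Fin ny) (Fin nx) ℝ} {F : Matrix (Fin ny) (Fin nu) ℝ}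
    {ylo yhi : RVec ny} {w σ : ℝ} (hσ : 0 ≤ σ) {N : ℕ} {p : HParams nx nu}
    (hp : p ∈ paramSet A B E F ylo yhi w σ) {x : RVec nx} (hx : x = hSeq w p.1 0) :
    FeasSol A B E F ylo yhi w σ N x (fun k => hSeq w p.1 k) (fun k => hSeq w p.2 k) p := by
  obtain ⟨hD, hC⟩ := hp
  refine ⟨hx.symm, fun k _ => hSeq_succ' hD k, fun k _ i => ?_, rfl, hD, hC⟩
  obtain ⟨hm1, hm2⟩ := margin' (w := w) hC k i
  exact ⟨by linarith, by linarith⟩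

lemma Jharm' {nx nu : ℕ} (Q Te Th : Matrix (Fin nx) (Fin nx) ℝ)
    (R Se Sh : Matrix (Fin nu) (Fin nu) ℝ) (w : ℝ) (N : ℕ) (r q : HParams nx nu) :
    Jcost Q Te Th R Se Sh w N r (fun k => hSeq w q.1 k) (fun k => hSeq w q.2 k) q
      = Vh Te Th Se Sh r q := by
  simp [Jcost, quadForm]

lemma Vh_le_Jcost' {nx nu : ℕ} {Q Te Th : Matrix (Fin nx) (Fin nx) ℝ}
    {R Se Sh : Matrix (Fin nu) (Fin nu) ℝ} (hQ : Q.PosDef) (hR : R.PosDef)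
    (w : ℝ) (N : ℕ) (r q : HParams nx nu) (xs : ℕ → RVec nx) (us : ℕ → RVec nu) :
    Vh Te Th Se Sh r q ≤ Jcost Q Te Th R Se Sh w N r xs us q := by
  have h : 0 ≤ ∑ k ∈ Finset.range N,
      (quadForm Q (xs k - hSeq w q.1 k) + quadForm R (us k - hSeq w q.2 k)) :=
    Finset.sum_nonneg fun k _ => add_nonneg (quadForm_nonneg' hQ _) (quadForm_nonneg' hR _)
  unfold Jcost
  linarith

lemma hSeq_conv' {m : ℕ} (w : ℝ) (a b : HTriple m) (t : ℝ) (k : ℕ) :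
    hSeq w (a + t • (b - a)) k = hSeq w a k + t • (hSeq w b k - hSeq w a k) := by
  obtain ⟨a1, a2, a3⟩ := a
  obtain ⟨b1, b2, b3⟩ := b
  simp only [Prod.mk_sub_mk, Prod.smul_mk, Prod.mk_add_mk, hSeq]
  module

lemma inD_conv' {nx nu : ℕ} {A : Matrix (Fin nx) (Fin nx) ℝ} {B : Matrix (Fin nx) (Fin nu) ℝ}
    {w : ℝ} {p q : HParams nx nu} (hp : inD A B w p) (hq : inD A B w q) (t : ℝ) :
    inD A B w (p + t • (q - p)) := by
  obtain ⟨hp1, hp2, hp3⟩ := hp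
  obtain ⟨hq1, hq2, hq3⟩ := hq
  refine ⟨?_, ?_, ?_⟩
  · show p.1.1 + t • (q.1.1 - p.1.1)
        = A.mulVec (p.1.1 + t • (q.1.1 - p.1.1)) + B.mulVec (p.2.1 + t • (q.2.1 - p.2.1))
    simp only [Matrix.mulVec_add, Matrix.mulVec_smul, Matrix.mulVec_sub]
    linear_combination (norm := module) hp1 + t • (hq1 - hp1)
  · show Real.cos w • (p.1.2.1 + t • (q.1.2.1 - p.1.2.1))
        - Real.sin w • (p.1.2.2 + t • (q.1.2.2 - p.1.2.2))
        = A.mulVec (p.1.2.1 + t • (q.1.2.1 - p.1.2.1))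
          + B.mulVec (p.2.2.1 + t • (q.2.2.1 - p.2.2.1))
    simp only [Matrix.mulVec_add, Matrix.mulVec_smul, Matrix.mulVec_sub]
    linear_combination (norm := module) hp2 + t • (hq2 - hp2)
  · show Real.sin w • (p.1.2.1 + t • (q.1.2.1 - p.1.2.1))
        + Real.cos w • (p.1.2.2 + t • (q.1.2.2 - p.1.2.2))
        = A.mulVec (p.1.2.2 + t • (q.1.2.2 - p.1.2.2))
          + B.mulVec (p.2.2.2 + t • (q.2.2.2 - p.2.2.2))
    simp only [Matrix.mulVec_add, Matrix.mulVec_smul, Matrix.mulVec_sub]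
    linear_combination (norm := module) hp3 + t • (hq3 - hp3)

lemma inC_conv' {nx nu ny : ℕ} {E : Matrix (Fin ny) (Fin nx) ℝ} {F : Matrix (Fin ny) (Fin nu) ℝ}
    {ylo yhi : RVec ny} {σ : ℝ} {p q : HParams nx nu}
    (hp : inC E F ylo yhi σ p) (hq : inC E F ylo yhi σ q) {t : ℝ} (h0 : 0 ≤ t) (h1 : t ≤ 1) :
    inC E F ylo yhi σ (p + t • (q - p)) := by
  intro i
  obtain ⟨hp1, hp2⟩ := hp i
  obtain ⟨hq1, hq2⟩ := hq i
  have key : ∀ {n : ℕ} (G : Matrix (Fin ny) (Fin n) ℝ) (a b : RVec n),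
      G.mulVec (a + t • (b - a)) i = (1 - t) * G.mulVec a i + t * G.mulVec b i := by
    intro n G a b
    simp only [Matrix.mulVec_add, Matrix.mulVec_smul, Matrix.mulVec_sub, Pi.add_apply,
      Pi.smul_apply, Pi.sub_apply, smul_eq_mul]
    ring
  have hsq := sqrt_conv' h0 h1
    ((E.mulVec p.1.2.1 + F.mulVec p.2.2.1) i) ((E.mulVec p.1.2.2 + F.mulVec p.2.2.2) i)
    ((E.mulVec q.1.2.1 + F.mulVec q.2.2.1) i) ((E.mulVec q.1.2.2 + F.mulVec q.2.2.2) i)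
  have hv1 : (E.mulVec (p + t • (q - p)).1.2.1 + F.mulVec (p + t • (q - p)).2.2.1) i
      = (1 - t) * (E.mulVec p.1.2.1 + F.mulVec p.2.2.1) i
        + t * (E.mulVec q.1.2.1 + F.mulVec q.2.2.1) i := by
    show (E.mulVec (p.1.2.1 + t • (q.1.2.1 - p.1.2.1))
        + F.mulVec (p.2.2.1 + t • (q.2.2.1 - p.2.2.1))) i = _
    simp only [Pi.add_apply, key]
    ring
  have hv2 : (E.mulVec (p + t • (q - p)).1.2.2 + F.mulVec (p + t • (q - p)).2.2.2) i
      = (1 - t) * (E.mulVec p.1.2.2 + F.mulVec p.2.2.2) i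
        + t * (E.mulVec q.1.2.2 + F.mulVec q.2.2.2) i := by
    show (E.mulVec (p.1.2.2 + t • (q.1.2.2 - p.1.2.2))
        + F.mulVec (p.2.2.2 + t • (q.2.2.2 - p.2.2.2))) i = _
    simp only [Pi.add_apply, key]
    ring
  have hv0 : (E.mulVec (p + t • (q - p)).1.1 + F.mulVec (p + t • (q - p)).2.1) i
      = (1 - t) * (E.mulVec p.1.1 + F.mulVec p.2.1) i
        + t * (E.mulVec q.1.1 + F.mulVec q.2.1) i := by
    show (E.mulVec (p.1.1 + t • (q.1.1 - p.1.1))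
        + F.mulVec (p.2.1 + t • (q.2.1 - p.2.1))) i = _
    simp only [Pi.add_apply, key]
    ring
  rw [hv0, hv1, hv2]
  constructor
  · calc Real.sqrt _ ≤ (1 - t) * Real.sqrt ((E.mulVec p.1.2.1 + F.mulVec p.2.2.1) i ^ 2
          + (E.mulVec p.1.2.2 + F.mulVec p.2.2.2) i ^ 2)
        + t * Real.sqrt ((E.mulVec q.1.2.1 + F.mulVec q.2.2.1) i ^ 2
          + (E.mulVec q.1.2.2 + F.mulVec q.2.2.2) i ^ 2) := hsq
    _ ≤ _ := by nlinarith
  · calc Real.sqrt _ ≤ (1 - t) * Real.sqrt ((E.mulVec p.1.2.1 + F.mulVec p.2.2.1) i ^ 2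
          + (E.mulVec p.1.2.2 + F.mulVec p.2.2.2) i ^ 2)
        + t * Real.sqrt ((E.mulVec q.1.2.1 + F.mulVec q.2.2.1) i ^ 2
          + (E.mulVec q.1.2.2 + F.mulVec q.2.2.2) i ^ 2) := hsq
    _ ≤ _ := by nlinarith

lemma steer' {nx nu : ℕ} (A : Matrix (Fin nx) (Fin nx) ℝ) (B : Matrix (Fin nx) (Fin nu) ℝ)
    {ν N : ℕ} (hν : ν ≤ N) (hrank : (ctrbMat A B ν).rank = nx) (δ : RVec nx) :
    ∃ (e : ℕ → RVec nx) (v : ℕ → RVec nu), e 0 = 0 ∧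
      (∀ k, e (k + 1) = A.mulVec (e k) + B.mulVec (v k)) ∧ e N = δ := by
  have hrange : LinearMap.range (ctrbMat A B ν).mulVecLin = ⊤ := by
    apply Submodule.eq_top_of_finrank_eq
    rw [Module.finrank_fintype_fun_eq_card, Fintype.card_fin]
    exact hrank
  obtain ⟨c, hc⟩ : ∃ c, (ctrbMat A B ν).mulVec c = δ := by
    have hδ : δ ∈ LinearMap.range (ctrbMat A B ν).mulVecLin := by rw [hrange]; trivial
    obtain ⟨c, hc⟩ := hδ
    exact ⟨c, by rw [← Matrix.mulVecLin_apply]; exact hc⟩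
  classical
  set v : ℕ → RVec nu := fun k =>
    if h : k < N ∧ N - 1 - k < ν then (fun i2 => c (⟨N - 1 - k, h.2⟩, i2)) else 0 with hv
  set e : ℕ → RVec nx :=
    fun k => ∑ j ∈ Finset.range k, ((A ^ (k - 1 - j)) * B).mulVec (v j) with he
  refine ⟨e, v, by simp [he], ?_, ?_⟩
  · intro k
    have h1 : A.mulVec (e k) = ∑ j ∈ Finset.range k, ((A ^ (k - j)) * B).mulVec (v j) := by
      show A.mulVec (∑ j ∈ Finset.range k, ((A ^ (k - 1 - j)) * B).mulVec (v j)) = _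
      rw [← Matrix.mulVecLin_apply, map_sum]
      refine Finset.sum_congr rfl fun j hj => ?_
      simp only [Finset.mem_range] at hj
      rw [Matrix.mulVecLin_apply, Matrix.mulVec_mulVec, ← Matrix.mul_assoc, ← pow_succ',
        show k - 1 - j + 1 = k - j from by omega]
    have h2 : ∀ j ∈ Finset.range k,
        ((A ^ (k + 1 - 1 - j)) * B).mulVec (v j) = ((A ^ (k - j)) * B).mulVec (v j) := by
      intro j hj
      congr 3
    show ∑ j ∈ Finset.range (k + 1), ((A ^ (k + 1 - 1 - j)) * B).mulVec (v j) = _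
    rw [Finset.sum_range_succ, Finset.sum_congr rfl h2, h1,
      show k + 1 - 1 - k = 0 by omega, pow_zero, Matrix.one_mul]
  · show ∑ j ∈ Finset.range N, ((A ^ (N - 1 - j)) * B).mulVec (v j) = δ
    rw [← hc]
    have hstep1 : ∑ j ∈ Finset.range N, ((A ^ (N - 1 - j)) * B).mulVec (v j)
        = ∑ j ∈ (Finset.range N).filter (fun j => N - 1 - j < ν),
            ((A ^ (N - 1 - j)) * B).mulVec (v j) := by
      symm
      apply Finset.sum_filter_of_ne
      intro j hj hne
      by_contra hcon
      apply hne
      have : v j = 0 := by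
        rw [hv]
        exact dif_neg (by push_neg; intro _; omega)
      rw [this, Matrix.mulVec_zero]
    set g : ℕ → RVec nx := fun q =>
      if hq : q < ν then ((A ^ q) * B).mulVec (fun i2 => c (⟨q, hq⟩, i2)) else 0 with hg
    have hstep2 : ∑ j ∈ (Finset.range N).filter (fun j => N - 1 - j < ν),
        ((A ^ (N - 1 - j)) * B).mulVec (v j) = ∑ q ∈ Finset.range ν, g q := by
      apply Finset.sum_nbij' (i := fun j => N - 1 - j) (j := fun q => N - 1 - q)
      · intro a ha
        simp only [Finset.mem_filter, Finset.mem_range] at ha ⊢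
        omega
      · intro a ha
        simp only [Finset.mem_filter, Finset.mem_range] at ha ⊢
        omega
      · intro a ha
        simp only [Finset.mem_filter, Finset.mem_range] at ha
        omega
      · intro a ha
        simp only [Finset.mem_range] at ha
        omega
      · intro a ha
        simp only [Finset.mem_filter, Finset.mem_range] at ha
        show ((A ^ (N - 1 - a)) * B).mulVec (v a)
            = if hq : N - 1 - a < ν then
                ((A ^ (N - 1 - a)) * B).mulVec (fun i2 => c (⟨N - 1 - a, hq⟩, i2)) else 0
        rw [dif_pos ha.2]
        have hva : v a = fun i2 => c (⟨N - 1 - a, ha.2⟩, i2) := by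
          show (if h : a < N ∧ N - 1 - a < ν then
              (fun i2 => c (⟨N - 1 - a, h.2⟩, i2)) else 0) = _
          rw [dif_pos (show a < N ∧ N - 1 - a < ν from ⟨ha.1, ha.2⟩)]
        rw [hva]
    have hstep3 : ∑ q ∈ Finset.range ν, g q = (ctrbMat A B ν).mulVec c := by
      rw [Finset.sum_range fun q => g q]
      have : ∀ q : Fin ν, g (q : ℕ) = ((A ^ (q : ℕ)) * B).mulVec (fun i2 => c (q, i2)) := by
        intro q
        show (if hq : (q : ℕ) < ν then
            ((A ^ (q : ℕ)) * B).mulVec (fun i2 => c (⟨(q : ℕ), hq⟩, i2)) else 0) = _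
        rw [dif_pos q.2]
      rw [Finset.sum_congr rfl fun q _ => this q]
      funext i
      simp only [Finset.sum_apply, Matrix.mulVec, dotProduct, ctrbMat, Matrix.of_apply,
        Fintype.sum_prod_type]
    rw [hstep1, hstep2, hstep3]

lemma rearr' {n : ℕ} (t : ℝ) (a c b : RVec n) : (a + t • b) - c = (a - c) + t • b := by
  module

end Aux

set_option maxHeartbeats 2000000 in
/-- under controllability and `N` at least the controllability index, for any
optimal HMPC solution at a feasible state `x`, `x = x̂_e* + x̂_c*` iff `x = x̊_e + x̊_c`, where
`(x̊, ů)` is the unique minimizer of `V_h` over `D ∩ C_σ`. -/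
theorem statement12 {nx nu ny : ℕ}
    (A : Matrix (Fin nx) (Fin nx) ℝ) (B : Matrix (Fin nx) (Fin nu) ℝ)
    (E : Matrix (Fin ny) (Fin nx) ℝ) (F : Matrix (Fin ny) (Fin nu) ℝ)
    (ylo yhi : RVec ny) (hy : ∀ i, ylo i < yhi i)
    (w σ : ℝ) (hw : 0 < w) (hσ : 0 < σ) (N : ℕ) (hN : 1 ≤ N)
    (Q Te Th : Matrix (Fin nx) (Fin nx) ℝ) (R Se Sh : Matrix (Fin nu) (Fin nu) ℝ)
    (hQ : Q.PosDef) (hR : R.PosDef) (hTe : Te.PosDef) (hSe : Se.PosDef)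
    (hTh : Th.PosDef) (hThd : Th.IsDiag) (hSh : Sh.PosDef) (hShd : Sh.IsDiag)
    (hctrl : (ctrbMat A B nx).rank = nx)
    (hNidx : ∃ ν ≤ N, (ctrbMat A B ν).rank = nx)
    (hne : (paramSet A B E F ylo yhi w σ).Nonempty)
    (r : HParams nx nu)
    (x : RVec nx) (hx : Feasible A B E F ylo yhi w σ N x)
    (xs : ℕ → RVec nx) (us : ℕ → RVec nu) (p : HParams nx nu)
    (hopt : OptSol A B E F ylo yhi Q Te Th R Se Sh w σ N r x xs us p)
    (rmin : HParams nx nu)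
    (hrmin : IsUniqueMinOn (Vh Te Th Se Sh r) (paramSet A B E F ylo yhi w σ) rmin) :
    x = p.1.1 + p.1.2.2 ↔ x = rmin.1.1 + rmin.1.2.2 := by
  obtain ⟨hfeas, hoptle⟩ := hopt
  obtain ⟨hx0, hdyn, hcon, hterm, hDp, hCp⟩ := hfeas
  have hpPS : p ∈ paramSet A B E F ylo yhi w σ := ⟨hDp, hCp⟩
  obtain ⟨hrPS, hrlt⟩ := hrmin
  obtain ⟨hDr, hCr⟩ := hrPS
  have key1 : x = rmin.1.1 + rmin.1.2.2 → p = rmin := by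
    intro hxr
    have hxh : x = hSeq w rmin.1 0 := by rw [hSeq_zero']; exact hxr
    have hf := harmFeas' (A := A) (B := B) (N := N) hσ.le ⟨hDr, hCr⟩ hxh
    have h1 : Jcost Q Te Th R Se Sh w N r xs us p ≤ Vh Te Th Se Sh r rmin := by
      have h := hoptle _ _ _ hf
      rwa [Jharm'] at h
    have h2 := Vh_le_Jcost' (Te := Te) (Th := Th) (Se := Se) (Sh := Sh) hQ hR w N r p xs us
    by_contra hne'
    have := hrlt p hpPS hne'
    linarith
  have key2 : x = p.1.1 + p.1.2.2 → p = rmin := by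
    intro hxp
    have hxh : x = hSeq w p.1 0 := by rw [hSeq_zero']; exact hxp
    by_contra hpr
    have hVlt : Vh Te Th Se Sh r rmin < Vh Te Th Se Sh r p := hrlt p hpPS hpr
    have hJle : Jcost Q Te Th R Se Sh w N r xs us p ≤ Vh Te Th Se Sh r p := by
      have h := hoptle _ _ _ (harmFeas' (A := A) (B := B) (N := N) hσ.le hpPS hxh)
      rwa [Jharm'] at h
    have hJ : Jcost Q Te Th R Se Sh w N r xs us p = Vh Te Th Se Sh r p :=
      le_antisymm hJle (Vh_le_Jcost' (Te := Te) (Th := Th) (Se := Se) (Sh := Sh) hQ hR w N r p xs us)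
    obtain ⟨ν, hνN, hνrank⟩ := hNidx
    obtain ⟨e, v, he0, herec, heN⟩ :=
      steer' A B hνN hνrank (hSeq w rmin.1 N - hSeq w p.1 N)
    set g : ℕ → RVec ny := fun k => E.mulVec (e k) + F.mulVec (v k) with hgdef
    set M : ℝ := ∑ k ∈ Finset.range N, ∑ i, |g k i| with hMdef
    have hM0 : 0 ≤ M := by
      rw [hMdef]
      exact Finset.sum_nonneg fun k _ => Finset.sum_nonneg fun i _ => abs_nonneg _
    have hMb : ∀ k, k < N → ∀ i, |g k i| ≤ M := by
      intro k hk i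
      calc |g k i| ≤ ∑ i', |g k i'| :=
            Finset.single_le_sum (f := fun i' => |g k i'|) (fun i' _ => abs_nonneg _)
              (Finset.mem_univ i)
        _ ≤ M := by
            rw [hMdef]
            exact Finset.single_le_sum (f := fun k' => ∑ i', |g k' i'|)
              (fun k' _ => Finset.sum_nonneg fun i' _ => abs_nonneg _)
              (Finset.mem_range.mpr hk)
    set K : ℝ := ∑ k ∈ Finset.range N,
      (quadForm Q (e k - (hSeq w rmin.1 k - hSeq w p.1 k))
        + quadForm R (v k - (hSeq w rmin.2 k - hSeq w p.2 k))) with hKdef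
    have hK0 : 0 ≤ K := by
      rw [hKdef]
      exact Finset.sum_nonneg fun k _ =>
        add_nonneg (quadForm_nonneg' hQ _) (quadForm_nonneg' hR _)
    set L : ℝ :=
      ((p.1.1 - r.1.1) ⬝ᵥ Te.mulVec (rmin.1.1 - p.1.1)
        + (rmin.1.1 - p.1.1) ⬝ᵥ Te.mulVec (p.1.1 - r.1.1))
      + ((p.1.2.1 - r.1.2.1) ⬝ᵥ Th.mulVec (rmin.1.2.1 - p.1.2.1)
        + (rmin.1.2.1 - p.1.2.1) ⬝ᵥ Th.mulVec (p.1.2.1 - r.1.2.1))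
      + ((p.1.2.2 - r.1.2.2) ⬝ᵥ Th.mulVec (rmin.1.2.2 - p.1.2.2)
        + (rmin.1.2.2 - p.1.2.2) ⬝ᵥ Th.mulVec (p.1.2.2 - r.1.2.2))
      + ((p.2.1 - r.2.1) ⬝ᵥ Se.mulVec (rmin.2.1 - p.2.1)
        + (rmin.2.1 - p.2.1) ⬝ᵥ Se.mulVec (p.2.1 - r.2.1))
      + ((p.2.2.1 - r.2.2.1) ⬝ᵥ Sh.mulVec (rmin.2.2.1 - p.2.2.1)
        + (rmin.2.2.1 - p.2.2.1) ⬝ᵥ Sh.mulVec (p.2.2.1 - r.2.2.1))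
      + ((p.2.2.2 - r.2.2.2) ⬝ᵥ Sh.mulVec (rmin.2.2.2 - p.2.2.2)
        + (rmin.2.2.2 - p.2.2.2) ⬝ᵥ Sh.mulVec (p.2.2.2 - r.2.2.2)) with hLdef
    set Qf : ℝ := quadForm Te (rmin.1.1 - p.1.1) + quadForm Th (rmin.1.2.1 - p.1.2.1)
      + quadForm Th (rmin.1.2.2 - p.1.2.2) + quadForm Se (rmin.2.1 - p.2.1)
      + quadForm Sh (rmin.2.2.1 - p.2.2.1) + quadForm Sh (rmin.2.2.2 - p.2.2.2) with hQfdef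
    have hVline : ∀ t : ℝ, Vh Te Th Se Sh r (p + t • (rmin - p))
        = Vh Te Th Se Sh r p + t * L + t ^ 2 * Qf := by
      intro t
      have acc : p + t • (rmin - p)
          = ((p.1.1 + t • (rmin.1.1 - p.1.1), p.1.2.1 + t • (rmin.1.2.1 - p.1.2.1),
              p.1.2.2 + t • (rmin.1.2.2 - p.1.2.2)),
            (p.2.1 + t • (rmin.2.1 - p.2.1), p.2.2.1 + t • (rmin.2.2.1 - p.2.2.1),
              p.2.2.2 + t • (rmin.2.2.2 - p.2.2.2))) := rfl
      rw [acc]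
      simp only [Vh]
      simp only [rearr']
      simp only [quadForm_add_smul']
      rw [hLdef, hQfdef]
      ring
    have hpr1 : p + (1 : ℝ) • (rmin - p) = rmin := by
      rw [one_smul]
      abel
    have hV1 : Vh Te Th Se Sh r rmin = Vh Te Th Se Sh r p + L + Qf := by
      have h := hVline 1
      rw [hpr1] at h
      simpa using h
    have hQf0 : 0 ≤ Qf := by
      rw [hQfdef]
      linarith [quadForm_nonneg' hTe (rmin.1.1 - p.1.1),
        quadForm_nonneg' hTh (rmin.1.2.1 - p.1.2.1),
        quadForm_nonneg' hTh (rmin.1.2.2 - p.1.2.2),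
        quadForm_nonneg' hSe (rmin.2.1 - p.2.1),
        quadForm_nonneg' hSh (rmin.2.2.1 - p.2.2.1),
        quadForm_nonneg' hSh (rmin.2.2.2 - p.2.2.2)]
    have hLQ : L + Qf < 0 := by linarith
    have hL0 : L < 0 := by linarith
    set lam : ℝ := min (min 1 (σ / (M + 1))) (-L / (2 * (K + Qf) + 1)) with hlamdef
    have hlam_pos : 0 < lam := by
      apply lt_min (lt_min one_pos (div_pos hσ (by linarith)))
      exact div_pos (by linarith) (by linarith)
    have hlam1 : lam ≤ 1 := le_trans (min_le_left _ _) (min_le_left _ _)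
    have hlamσ : lam ≤ σ / (M + 1) := le_trans (min_le_left _ _) (min_le_right _ _)
    have hlamL : lam ≤ -L / (2 * (K + Qf) + 1) := min_le_right _ _
    have hDq := inD_conv' hDp hDr lam
    have hCq := inC_conv' hCp hCr hlam_pos.le hlam1
    have hq1acc : (p + lam • (rmin - p)).1 = p.1 + lam • (rmin.1 - p.1) := rfl
    have hq2acc : (p + lam • (rmin - p)).2 = p.2 + lam • (rmin.2 - p.2) := rfl
    have hfeas' : FeasSol A B E F ylo yhi w σ N x
        (fun k => hSeq w p.1 k + lam • e k) (fun k => hSeq w p.2 k + lam • v k)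
        (p + lam • (rmin - p)) := by
      refine ⟨?_, ?_, ?_, ?_, hDq, hCq⟩
      · show hSeq w p.1 0 + lam • e 0 = x
        rw [he0, smul_zero, add_zero]
        exact hxh.symm
      · intro k _
        show hSeq w p.1 (k + 1) + lam • e (k + 1) = _
        rw [hSeq_succ' hDp, herec]
        simp only [Matrix.mulVec_add, Matrix.mulVec_smul]
        module
      · intro k hk i
        have hval : (E.mulVec (hSeq w p.1 k + lam • e k)
            + F.mulVec (hSeq w p.2 k + lam • v k)) i
            = (E.mulVec (hSeq w p.1 k) + F.mulVec (hSeq w p.2 k)) i + lam * g k i := by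
          simp only [hgdef, Matrix.mulVec_add, Matrix.mulVec_smul, Pi.add_apply,
            Pi.smul_apply, smul_eq_mul]
          ring
        obtain ⟨hm1, hm2⟩ := margin' (w := w) hCp k i
        have hgb := hMb k hk i
        have hlM : lam * (M + 1) ≤ σ := (le_div_iff₀ (by linarith : (0:ℝ) < M + 1)).mp hlamσ
        have habs : |lam * g k i| ≤ σ := by
          rw [abs_mul, abs_of_pos hlam_pos]
          nlinarith [abs_nonneg (g k i)]
        obtain ⟨hga, hgb'⟩ := abs_le.mp habs
        constructor <;> rw [hval] <;> linarith
      · show hSeq w p.1 N + lam • e N = hSeq w (p + lam • (rmin - p)).1 N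
        rw [hq1acc, hSeq_conv', heN]
    have hcost : Jcost Q Te Th R Se Sh w N r (fun k => hSeq w p.1 k + lam • e k)
        (fun k => hSeq w p.2 k + lam • v k) (p + lam • (rmin - p))
        = lam ^ 2 * K + (Vh Te Th Se Sh r p + lam * L + lam ^ 2 * Qf) := by
      have hterm' : ∀ k,
          quadForm Q ((hSeq w p.1 k + lam • e k) - hSeq w (p + lam • (rmin - p)).1 k)
          + quadForm R ((hSeq w p.2 k + lam • v k) - hSeq w (p + lam • (rmin - p)).2 k)
          = lam ^ 2 * (quadForm Q (e k - (hSeq w rmin.1 k - hSeq w p.1 k))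
            + quadForm R (v k - (hSeq w rmin.2 k - hSeq w p.2 k))) := by
        intro k
        have h1 : (hSeq w p.1 k + lam • e k) - hSeq w (p + lam • (rmin - p)).1 k
            = lam • (e k - (hSeq w rmin.1 k - hSeq w p.1 k)) := by
          rw [hq1acc, hSeq_conv']
          module
        have h2 : (hSeq w p.2 k + lam • v k) - hSeq w (p + lam • (rmin - p)).2 k
            = lam • (v k - (hSeq w rmin.2 k - hSeq w p.2 k)) := by
          rw [hq2acc, hSeq_conv']
          module
        rw [h1, h2, quadForm_smul', quadForm_smul']
        ring
      unfold Jcost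
      rw [Finset.sum_congr rfl fun k _ => hterm' k, ← Finset.mul_sum, hVline lam, ← hKdef]
    have hcomp := hoptle _ _ _ hfeas'
    rw [hJ, hcost] at hcomp
    have h1' : 0 ≤ L + lam * (K + Qf) := by
      by_contra hcon
      push_neg at hcon
      nlinarith [hcomp, hlam_pos]
    have h2' : lam * (K + Qf) < -L := by
      have h2S : lam * (2 * (K + Qf) + 1) ≤ -L :=
        (le_div_iff₀ (by linarith)).mp hlamL
      nlinarith [mul_nonneg hlam_pos.le (by linarith : (0:ℝ) ≤ K + Qf)]
    linarith
  constructor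
  · intro h
    have hp2 := key2 h
    rw [← hp2]
    exact h
  · intro h
    have hp1 := key1 h
    rw [hp1]
    exact h
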